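/- Let (a_n) be an increasing sequence of reals tending to ∞ and let E = {y ∈ ℝ : (y·a_n) is not dense modulo 1}. If EE⁻¹ = {x/y : x, y ∈ E, y ≠ 0} ≠ ℝ, then for every 0 ≤ p < 1 there exists a p-large set containing no affine copy of (a_n); i.e., there are no x ∈ ℝ and y ≠ 0 with x + y·a_n in the set for all n. -/

import Mathlib

open MeasureTheory Filter
open scoped ENNReal Pointwise

/-- A measurable set `E ⊆ ℝ` is `p`-large if `m(E ∩ [k, k+1]) ≥ p` for every integer `k`. -/
def PLarge (p : ℝ) (E : Set ℝ) : Prop :=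
  ∀ k : ℤ, ENNReal.ofReal p ≤ volume (E ∩ Set.Icc (k : ℝ) (k + 1))

/-- The sequence `x` is dense modulo 1: its fractional parts are dense in `[0,1)`. -/
def DenseMod1 (x : ℕ → ℝ) : Prop :=
  ∀ t ∈ Set.Ico (0 : ℝ) 1, ∀ ε > 0, ∃ n, |Int.fract (x n) - t| < ε

/-- If `s` is dense mod 1, then for any shift `x` some `x + s n` has fractional part
in the top window `(1-ε, 1)`. -/
lemma fract_hit (s : ℕ → ℝ) (hs : DenseMod1 s) (x ε : ℝ) (hε : 0 < ε) (hε1 : ε ≤ 1) :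
    ∃ n, 1 - ε < Int.fract (x + s n) := by
  obtain ⟨n, hn⟩ := hs (Int.fract (1 - ε / 2 - x))
    (Set.mem_Ico.2 ⟨Int.fract_nonneg _, Int.fract_lt_one _⟩) (ε / 4) (by linarith)
  refine ⟨n, ?_⟩
  set δ := Int.fract (s n) - Int.fract (1 - ε / 2 - x) with hδ
  obtain ⟨hδ1, hδ2⟩ := abs_lt.1 hn
  have h1 : Int.fract (x + s n) = Int.fract (x + Int.fract (s n)) := by
    conv_lhs => rw [show s n = x + Int.fract (s n) + (⌊s n⌋ : ℝ) - x by
      rw [Int.fract]; ring]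
    rw [show x + (x + Int.fract (s n) + (⌊s n⌋ : ℝ) - x) = x + Int.fract (s n) + ⌊s n⌋ by ring,
      Int.fract_add_intCast]
  have h2 : x + Int.fract (s n) = (1 - ε / 2 + δ) - (⌊1 - ε / 2 - x⌋ : ℤ) := by
    simp only [hδ, ← Int.self_sub_floor]; push_cast; ring
  rw [h1, h2, Int.fract_sub_intCast, Int.fract_eq_self.2 ⟨by linarith, by linarith⟩]
  linarith

/-- The part of `[c,d]` where the fractional part exceeds `1 - ε` has measure at most
`ε * (d - c + 2)`. -/
lemma vol_fract_gt (ε : ℝ) (hε : 0 ≤ ε) (c d : ℝ) (hcd : c ≤ d) :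
    volume ({t : ℝ | 1 - ε < Int.fract t} ∩ Set.Icc c d)
      ≤ ENNReal.ofReal (ε * (d - c + 2)) := by
  have hsub : {t : ℝ | 1 - ε < Int.fract t} ∩ Set.Icc c d ⊆
      ⋃ j ∈ Finset.Icc ⌊c⌋ ⌊d⌋, Set.Ioc ((j : ℝ) + 1 - ε) ((j : ℝ) + 1) := by
    rintro t ⟨ht, htc, htd⟩
    refine Set.mem_biUnion (Finset.mem_Icc.2 ⟨Int.floor_le_floor htc, Int.floor_le_floor htd⟩) ?_
    have hf : Int.fract t = t - ⌊t⌋ := rfl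
    have h1 : t < (⌊t⌋ : ℝ) + 1 := Int.lt_floor_add_one t
    constructor
    · have := ht; rw [Set.mem_setOf_eq, hf] at this; linarith
    · linarith
  calc volume ({t : ℝ | 1 - ε < Int.fract t} ∩ Set.Icc c d)
      ≤ volume (⋃ j ∈ Finset.Icc ⌊c⌋ ⌊d⌋, Set.Ioc ((j : ℝ) + 1 - ε) ((j : ℝ) + 1)) :=
        measure_mono hsub
    _ ≤ ∑ j ∈ Finset.Icc ⌊c⌋ ⌊d⌋, volume (Set.Ioc ((j : ℝ) + 1 - ε) ((j : ℝ) + 1)) :=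
        measure_biUnion_finset_le _ _
    _ = ∑ j ∈ Finset.Icc ⌊c⌋ ⌊d⌋, ENNReal.ofReal ε := by
        refine Finset.sum_congr rfl fun j _ => ?_
        rw [Real.volume_Ioc]; congr 1; ring
    _ = (Finset.Icc ⌊c⌋ ⌊d⌋).card * ENNReal.ofReal ε := by
        rw [Finset.sum_const, nsmul_eq_mul]
    _ ≤ ENNReal.ofReal (ε * (d - c + 2)) := by
        rcases le_or_gt ⌊c⌋ ⌊d⌋ with h | h
        · have hcard : (Finset.Icc ⌊c⌋ ⌊d⌋).card = (⌊d⌋ + 1 - ⌊c⌋).toNat := Int.card_Icc _ _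
          have hcr : ((Finset.Icc ⌊c⌋ ⌊d⌋).card : ℝ) ≤ d - c + 2 := by
            rw [hcard]
            have h1 : (((⌊d⌋ + 1 - ⌊c⌋).toNat : ℤ) : ℝ) = ((⌊d⌋ : ℝ) + 1 - ⌊c⌋) := by
              rw [Int.toNat_of_nonneg (by omega)]; push_cast; ring
            rw [← Int.cast_natCast, h1]
            have h2 : (⌊d⌋ : ℝ) ≤ d := Int.floor_le d
            have h3 : c - 1 < (⌊c⌋ : ℝ) := by
              have := Int.lt_floor_add_one c; linarith
            linarith
          calc ((Finset.Icc ⌊c⌋ ⌊d⌋).card : ℝ≥0∞) * ENNReal.ofReal ε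
              = ENNReal.ofReal ((Finset.Icc ⌊c⌋ ⌊d⌋).card * ε) := by
                rw [ENNReal.ofReal_mul (by positivity), ENNReal.ofReal_natCast]
            _ ≤ ENNReal.ofReal (ε * (d - c + 2)) := by
                apply ENNReal.ofReal_le_ofReal
                rw [mul_comm]
                exact mul_le_mul_of_nonneg_left hcr hε
        · have hemp : Finset.Icc ⌊c⌋ ⌊d⌋ = ∅ := Finset.Icc_eq_empty (by omega)
          rw [hemp]
          simp

/-- Scaled version: the part of a unit interval where `fract (t / α) > 1 - ε` has measure
at most `ε * (1 + 2 * |α|)`. -/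
lemma vol_fract_div (ε α : ℝ) (hε : 0 ≤ ε) (hε1 : ε < 1) (k : ℝ) :
    volume ({t : ℝ | 1 - ε < Int.fract (t / α)} ∩ Set.Icc k (k + 1))
      ≤ ENNReal.ofReal (ε * (1 + 2 * |α|)) := by
  rcases eq_or_ne α 0 with rfl | hα
  · have : {t : ℝ | 1 - ε < Int.fract (t / 0)} = ∅ := by
      ext t; simp [Int.fract_zero]; linarith
    rw [this, Set.empty_inter, measure_empty]
    positivity
  · set c := min (k / α) ((k + 1) / α) with hc
    set d := max (k / α) ((k + 1) / α) with hd
    have hcd : c ≤ d := min_le_max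
    have hdc : d - c = 1 / |α| := by
      rw [hd, hc, max_sub_min_eq_abs, ← sub_div, abs_div]
      simp
    have himg : {t : ℝ | 1 - ε < Int.fract (t / α)} ∩ Set.Icc k (k + 1) ⊆
        α • ({t : ℝ | 1 - ε < Int.fract t} ∩ Set.Icc c d) := by
      rintro t ⟨ht, htk⟩
      refine ⟨t / α, ⟨ht, ?_⟩, by simp only [smul_eq_mul]; field_simp⟩
      obtain ⟨h1, h2⟩ := htk
      have hu : α * (t / α) = t := by field_simp
      rcases lt_or_gt_of_ne hα with hneg | hpos
      · constructor
        · refine le_trans (min_le_right _ _) ?_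
          rw [div_le_iff_of_neg hneg]; nlinarith
        · refine le_trans ?_ (le_max_left _ _)
          rw [le_div_iff_of_neg hneg]; nlinarith
      · constructor
        · refine le_trans (min_le_left _ _) ?_
          rw [div_le_iff₀ hpos]; nlinarith
        · refine le_trans ?_ (le_max_right _ _)
          rw [le_div_iff₀ hpos]; nlinarith
    calc volume ({t : ℝ | 1 - ε < Int.fract (t / α)} ∩ Set.Icc k (k + 1))
        ≤ volume (α • ({t : ℝ | 1 - ε < Int.fract t} ∩ Set.Icc c d)) := measure_mono himg
      _ = ENNReal.ofReal |α| * volume ({t : ℝ | 1 - ε < Int.fract t} ∩ Set.Icc c d) := by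
          rw [Measure.addHaar_smul]
          congr 2
          simp
      _ ≤ ENNReal.ofReal |α| * ENNReal.ofReal (ε * (d - c + 2)) := by
          exact mul_le_mul_right (vol_fract_gt ε hε c d hcd) _
      _ = ENNReal.ofReal (ε * (1 + 2 * |α|)) := by
          rw [← ENNReal.ofReal_mul (abs_nonneg _)]
          congr 1
          rw [hdc]
          have h0 : |α| ≠ 0 := abs_ne_zero.2 hα
          field_simp
 
theorem stmt_11 (a : ℕ → ℝ) (hmono : StrictMono a) (hlim : Tendsto a atTop atTop)
    (E : Set ℝ) (hE : E = {y : ℝ | ¬ DenseMod1 (fun n => y * a n)})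
    (hquot : {z : ℝ | ∃ x ∈ E, ∃ y ∈ E, y ≠ 0 ∧ z = x / y} ≠ Set.univ)
    (p : ℝ) (hp0 : 0 ≤ p) (hp1 : p < 1) :
    ∃ F : Set ℝ, MeasurableSet F ∧ PLarge p F ∧
      ¬ ∃ x y : ℝ, y ≠ 0 ∧ ∀ n, x + y * a n ∈ F := by
  obtain ⟨α, hα⟩ := (Set.ne_univ_iff_exists_notMem _).1 hquot
  set ε : ℝ := (1 - p) / (5 + 2 * |α|) with hε
  have habs : (0:ℝ) ≤ |α| := abs_nonneg α
  have hεpos : 0 < ε := div_pos (by linarith) (by positivity)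
  have hε1 : ε < 1 := by
    rw [hε, div_lt_one (by positivity)]; linarith
  refine ⟨{t : ℝ | Int.fract t ≤ 1 - ε} ∩ {t : ℝ | Int.fract (t / α) ≤ 1 - ε}, ?_, ?_, ?_⟩
  · exact (measurableSet_le measurable_fract measurable_const).inter
      (measurableSet_le (measurable_fract.comp (measurable_id.div_const α)) measurable_const)
  · intro k
    set F := {t : ℝ | Int.fract t ≤ 1 - ε} ∩ {t : ℝ | Int.fract (t / α) ≤ 1 - ε} with hF
    set I := Set.Icc (k : ℝ) ((k : ℝ) + 1) with hI
    have hcover : I ⊆ (F ∩ I) ∪ (({t : ℝ | 1 - ε < Int.fract t} ∩ I)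
        ∪ ({t : ℝ | 1 - ε < Int.fract (t / α)} ∩ I)) := by
      intro t ht
      rcases le_or_gt (Int.fract t) (1 - ε) with h1 | h1
      · rcases le_or_gt (Int.fract (t / α)) (1 - ε) with h2 | h2
        · exact Or.inl ⟨⟨h1, h2⟩, ht⟩
        · exact Or.inr (Or.inr ⟨h2, ht⟩)
      · exact Or.inr (Or.inl ⟨h1, ht⟩)
    have hv1 : volume ({t : ℝ | 1 - ε < Int.fract t} ∩ I) ≤ ENNReal.ofReal (ε * 3) := by
      have := vol_fract_gt ε hεpos.le (k : ℝ) ((k : ℝ) + 1) (by linarith)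
      convert this using 2
      ring
    have hv2 : volume ({t : ℝ | 1 - ε < Int.fract (t / α)} ∩ I)
        ≤ ENNReal.ofReal (ε * (1 + 2 * |α|)) := vol_fract_div ε α hεpos.le hε1 (k : ℝ)
    have hIvol : volume I = 1 := by
      rw [hI, Real.volume_Icc]; norm_num
    have hle : (1 : ℝ≥0∞) ≤ volume (F ∩ I) + ENNReal.ofReal (ε * (4 + 2 * |α|)) := by
      calc (1 : ℝ≥0∞) = volume I := hIvol.symm
        _ ≤ volume (F ∩ I) + volume (({t : ℝ | 1 - ε < Int.fract t} ∩ I)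
            ∪ ({t : ℝ | 1 - ε < Int.fract (t / α)} ∩ I)) :=
              le_trans (measure_mono hcover) (measure_union_le _ _)
        _ ≤ volume (F ∩ I) + (ENNReal.ofReal (ε * 3) + ENNReal.ofReal (ε * (1 + 2 * |α|))) := by
              gcongr
              exact le_trans (measure_union_le _ _) (add_le_add hv1 hv2)
        _ = volume (F ∩ I) + ENNReal.ofReal (ε * (4 + 2 * |α|)) := by
              rw [← ENNReal.ofReal_add (by positivity) (by positivity)]
              congr 1
              ring
    have hkey : ENNReal.ofReal p + ENNReal.ofReal (ε * (4 + 2 * |α|))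
        ≤ volume (F ∩ I) + ENNReal.ofReal (ε * (4 + 2 * |α|)) := by
      refine le_trans ?_ hle
      rw [← ENNReal.ofReal_add hp0 (by positivity)]
      rw [show (1 : ℝ≥0∞) = ENNReal.ofReal 1 by simp]
      apply ENNReal.ofReal_le_ofReal
      have : ε * (4 + 2 * |α|) ≤ 1 - p := by
        rw [hε, div_mul_eq_mul_div, div_le_iff₀ (by positivity)]
        nlinarith [sub_nonneg.2 hp1.le]
      linarith
    exact (ENNReal.add_le_add_iff_right ENNReal.ofReal_ne_top).1 hkey
  · rintro ⟨x, y, hy, hmem⟩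
    by_cases hyE : y ∈ E
    · have h0E : (0 : ℝ) ∈ E := by
        rw [hE]
        intro h
        obtain ⟨n, hn⟩ := h (1/2) ⟨by norm_num, by norm_num⟩ (1/4) (by norm_num)
        simp only [zero_mul, Int.fract_zero, zero_sub, abs_neg] at hn
        rw [abs_of_nonneg (by norm_num)] at hn
        norm_num at hn
      have hα0 : α ≠ 0 := by
        rintro rfl
        exact hα ⟨0, h0E, y, hyE, hy, by simp⟩
      have hyα : y / α ∉ E := by
        intro h
        exact hα ⟨y, hyE, y / α, h, div_ne_zero hy hα0, by field_simp⟩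
      have hd : DenseMod1 (fun n => (y / α) * a n) := by
        rw [hE] at hyα
        simpa using hyα
      obtain ⟨n, hn⟩ := fract_hit _ hd (x / α) ε hεpos hε1.le
      have h2 := (hmem n).2
      have h3 : (x + y * a n) / α = x / α + y / α * a n := by
        field_simp
      rw [Set.mem_setOf_eq, h3] at h2
      linarith
    · have hd : DenseMod1 (fun n => y * a n) := by
        rw [hE] at hyE
        simpa using hyE
      obtain ⟨n, hn⟩ := fract_hit _ hd x ε hεpos hε1.le
      have h1 := (hmem n).1
      rw [Set.mem_setOf_eq] at h1
      linarith
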